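/- Let (X,d,μ) be a locally compact metric measure space such that μ satisfies a locally uniform comparability condition. Then for every compact set K ⊆ X there exist constants r_K, C_K > 0 and a compact set K' ⊆ X containing K such that for every f ∈ L^∞_loc(X,μ): sup_{r ∈ (0,r_K)} ‖A_r* f − f‖_{L^∞(K,μ)} ≤ C_K ‖f‖_{L^∞(K',μ)}, where A_r* f(x) := ∫_{B_r(x)} f(y) / μ(B_r(y)) dμ(y). -/

import Mathlib

open MeasureTheory Filter Metric Set
open scoped ENNReal Topology

/-- The adjoint averaging operator `A_r* f (x) = ∫_{B_r(x)} f(y)/μ(B_r(y)) dμ(y)`. -/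
noncomputable def Astar {X : Type*} [MetricSpace X] [MeasurableSpace X]
    (μ : Measure X) (f : X → ℝ) (r : ℝ) (x : X) : ℝ :=
  ∫ y in ball x r, f y / (μ (ball y r)).toReal ∂μ

/-- On a locally compact metric measure space satisfying a locally uniform
comparability condition, for every compact `K` there are `r_K, C_K > 0` and a compact
`K' ⊇ K` such that for every `f ∈ L^∞_loc(X,μ)`:
`sup_{r ∈ (0,r_K)} ‖A_r* f − f‖_{L^∞(K,μ)} ≤ C_K ‖f‖_{L^∞(K',μ)}`. -/
theorem stmt_11 {X : Type*} [MetricSpace X] [MeasurableSpace X] [BorelSpace X]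
    [LocallyCompactSpace X]
    (μ : Measure X)
    (hμ : ∀ (x : X) (r : ℝ), 0 < r → 0 < μ (ball x r) ∧ μ (ball x r) < ∞)
    (hcomp : ∀ x₀ : X, ∃ V ∈ 𝓝 x₀, ∃ r₀ C : ℝ, 0 < r₀ ∧ 0 < C ∧
      ∀ᵐ x ∂μ.restrict V, ∀ r : ℝ, 0 < r → r < r₀ →
        ∀ᵐ y ∂μ.restrict (ball x r), μ (ball x r) ≤ ENNReal.ofReal C * μ (ball y r))
    (K : Set X) (hK : IsCompact K) :
    ∃ rK CK : ℝ, 0 < rK ∧ 0 < CK ∧ ∃ K' : Set X, IsCompact K' ∧ K ⊆ K' ∧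
      ∀ f : X → ℝ, AEMeasurable f μ →
        (∀ x : X, ∃ V ∈ 𝓝 x, eLpNorm f ∞ (μ.restrict V) < ∞) →
        ∀ r : ℝ, 0 < r → r < rK →
          eLpNorm (fun x => Astar μ f r x - f x) ∞ (μ.restrict K) ≤
            ENNReal.ofReal CK * eLpNorm f ∞ (μ.restrict K') := by
  rcases K.eq_empty_or_nonempty with hKe | hKne
  · refine ⟨1, 1, one_pos, one_pos, ∅, isCompact_empty, hKe.le, ?_⟩
    intro f _ _ r _ _
    subst hKe
    simp
  -- a compact superset with some room
  obtain ⟨K'', hK''c, hK''⟩ := exists_compact_superset hK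
  obtain ⟨δ, hδ0, hδ⟩ := hK.exists_cthickening_subset_open isOpen_interior hK''
  set K' := cthickening δ K with hK'def
  have hK'c : IsCompact K' :=
    hK''c.of_isClosed_subset isClosed_cthickening (hδ.trans interior_subset)
  have hKK' : K ⊆ K' := self_subset_cthickening K
  -- choose comparability data at each point, with open neighborhoods
  choose V hV r₀ C hr₀ hC hae using hcomp
  have hU : ∀ x : X, ∃ U : Set X, U ⊆ V x ∧ IsOpen U ∧ x ∈ U := by
    intro x; exact mem_nhds_iff.mp (hV x)
  choose U hUV hUopen hxU using hU
  obtain ⟨t, htK, htcov⟩ := hK.elim_nhds_subcover U (fun x _ => (hUopen x).mem_nhds (hxU x))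
  have htne : t.Nonempty := by
    obtain ⟨x, hx⟩ := hKne
    obtain ⟨i, hi, -⟩ := Set.mem_iUnion₂.mp (htcov hx)
    exact ⟨i, hi⟩
  set rK : ℝ := min δ (t.inf' htne r₀) with hrKdef
  have hrK0 : 0 < rK := by
    refine lt_min hδ0 ?_
    obtain ⟨i, hi⟩ := htne
    exact (Finset.lt_inf'_iff _).mpr fun j hj => hr₀ j
  set Cm : ℝ := t.sup' htne C with hCmdef
  have hCm0 : 0 < Cm := by
    obtain ⟨i, hi⟩ := htne
    exact lt_of_lt_of_le (hC i) (Finset.le_sup' C hi)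
  refine ⟨rK, Cm + 1, hrK0, by linarith, K', hK'c, hKK', ?_⟩
  intro f hfm hfloc r hr hrK
  set M : ℝ≥0∞ := eLpNorm f ∞ (μ.restrict K') with hMdef
  by_cases hM : M = ∞
  · rw [hM, ENNReal.mul_top (by simp only [ne_eq, ENNReal.ofReal_eq_zero, not_le]; linarith)]
    exact le_top
  -- now M < ∞
  have hrδ : r < δ := lt_of_lt_of_le hrK (min_le_left _ _)
  -- ae bound of f on K'
  have hfK' : ∀ᵐ y ∂μ.restrict K', (‖f y‖₊ : ℝ≥0∞) ≤ M := by
    rw [hMdef, eLpNorm_exponent_top]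
    exact ae_le_eLpNormEssSup
  -- combined comparability on all pieces, as an ae statement for μ
  have hcompall : ∀ᵐ x ∂μ, ∀ i ∈ (t : Set X), x ∈ U i →
      ∀ r' : ℝ, 0 < r' → r' < r₀ i →
        ∀ᵐ y ∂μ.restrict (ball x r'), μ (ball x r') ≤ ENNReal.ofReal (C i) * μ (ball y r') := by
    rw [ae_ball_iff t.countable_toSet]
    intro i hi
    rw [← ae_restrict_iff' (hUopen i).measurableSet]
    exact ae_mono (Measure.restrict_mono (hUV i) le_rfl) (hae i)
  have hball_sub : ∀ x ∈ K, ball x r ⊆ K' := by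
    intro x hx y hy
    exact thickening_subset_cthickening δ K
      (mem_thickening_iff.mpr ⟨x, hx, lt_trans (mem_ball.mp hy) hrδ⟩)
  -- the ae pointwise bound on K
  have hMreal : (0:ℝ) ≤ M.toReal := ENNReal.toReal_nonneg
  have key : ∀ᵐ x ∂μ.restrict K,
      (‖Astar μ f r x - f x‖₊ : ℝ≥0∞) ≤ ENNReal.ofReal (Cm + 1) * M := by
    filter_upwards [ae_restrict_mem hK.isClosed.measurableSet,
      ae_mono (Measure.restrict_mono hKK' le_rfl) hfK',
      ae_restrict_of_ae hcompall] with x hxK hfx hcx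
    obtain ⟨i, hit, hxUi⟩ := Set.mem_iUnion₂.mp (htcov hxK)
    have hitS : i ∈ (t : Set X) := Finset.mem_coe.mpr hit
    have hrr₀ : r < r₀ i :=
      lt_of_lt_of_le hrK ((min_le_right _ _).trans (Finset.inf'_le r₀ hit))
    have hcmp := hcx i hitS hxUi r hr hrr₀
    have hxball := hμ x r hr
    have ha0 : (0:ℝ) < (μ (ball x r)).toReal :=
      ENNReal.toReal_pos hxball.1.ne' hxball.2.ne
    -- bound the integrand a.e. on the ball
    have hfb : ∀ᵐ y ∂μ.restrict (ball x r), (‖f y‖₊ : ℝ≥0∞) ≤ M :=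
      ae_mono (Measure.restrict_mono (hball_sub x hxK) le_rfl) hfK'
    have hbound : ∀ᵐ y ∂μ.restrict (ball x r),
        ‖f y / (μ (ball y r)).toReal‖ ≤ Cm * M.toReal / (μ (ball x r)).toReal := by
      filter_upwards [hfb, hcmp] with y hfy hcy
      have hyball := hμ y r hr
      have hb0 : (0:ℝ) < (μ (ball y r)).toReal :=
        ENNReal.toReal_pos hyball.1.ne' hyball.2.ne
      have hfyr : ‖f y‖ ≤ M.toReal := by
        have := ENNReal.toReal_mono hM hfy
        simpa using this
      have hab : (μ (ball x r)).toReal ≤ C i * (μ (ball y r)).toReal := by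
        have hfin : ENNReal.ofReal (C i) * μ (ball y r) ≠ ∞ :=
          ENNReal.mul_ne_top ENNReal.ofReal_ne_top hyball.2.ne
        have := ENNReal.toReal_mono hfin hcy
        rwa [ENNReal.toReal_mul, ENNReal.toReal_ofReal (hC i).le] at this
      have hCiCm : C i ≤ Cm := Finset.le_sup' C hit
      have h1 : ‖f y / (μ (ball y r)).toReal‖ ≤ M.toReal / (μ (ball y r)).toReal := by
        rw [norm_div, Real.norm_eq_abs (((μ (ball y r)).toReal)), abs_of_pos hb0]
        exact (div_le_div_iff_of_pos_right hb0).mpr hfyr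
      refine h1.trans ?_
      rw [div_le_div_iff₀ hb0 ha0]
      calc M.toReal * (μ (ball x r)).toReal
          ≤ M.toReal * (C i * (μ (ball y r)).toReal) :=
            mul_le_mul_of_nonneg_left hab hMreal
        _ ≤ M.toReal * (Cm * (μ (ball y r)).toReal) :=
            mul_le_mul_of_nonneg_left (mul_le_mul_of_nonneg_right hCiCm hb0.le) hMreal
        _ = Cm * M.toReal * (μ (ball y r)).toReal := by ring
    have hAs : ‖Astar μ f r x‖ ≤ Cm * M.toReal := by
      have := norm_setIntegral_le_of_norm_le_const_ae (μ := μ) hxball.2 hbound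
      rw [measureReal_def, div_mul_cancel₀ _ ha0.ne'] at this
      exact this
    -- assemble
    have hsplit : (‖Astar μ f r x - f x‖₊ : ℝ≥0∞) ≤
        (‖Astar μ f r x‖₊ : ℝ≥0∞) + (‖f x‖₊ : ℝ≥0∞) := by
      rw [← ENNReal.coe_add]
      exact_mod_cast nnnorm_sub_le _ _
    refine hsplit.trans ?_
    have h2 : (‖Astar μ f r x‖₊ : ℝ≥0∞) ≤ ENNReal.ofReal Cm * M := by
      have : (‖Astar μ f r x‖₊ : ℝ≥0∞) = ENNReal.ofReal ‖Astar μ f r x‖ := by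
        rw [ENNReal.ofReal, Real.toNNReal_eq_nnnorm_of_nonneg (norm_nonneg _)]
        simp
      rw [this]
      calc ENNReal.ofReal ‖Astar μ f r x‖ ≤ ENNReal.ofReal (Cm * M.toReal) :=
            ENNReal.ofReal_le_ofReal hAs
        _ = ENNReal.ofReal Cm * ENNReal.ofReal M.toReal := ENNReal.ofReal_mul hCm0.le
        _ = ENNReal.ofReal Cm * M := by rw [ENNReal.ofReal_toReal hM]
    calc (‖Astar μ f r x‖₊ : ℝ≥0∞) + (‖f x‖₊ : ℝ≥0∞)
        ≤ ENNReal.ofReal Cm * M + M := add_le_add h2 hfx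
      _ = (ENNReal.ofReal Cm + 1) * M := by rw [add_mul, one_mul]
      _ = ENNReal.ofReal (Cm + 1) * M := by
          rw [ENNReal.ofReal_add hCm0.le zero_le_one, ENNReal.ofReal_one]
  rw [eLpNorm_exponent_top, eLpNormEssSup]
  exact essSup_le_of_ae_le _ key
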